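/- Let μ : ℝ → ℝ be non-increasing, bounded, right-continuous, with lim_{ξ→+∞} μ(ξ) = 0, and let ν be the Lebesgue–Stieltjes measure of −μ, i.e. the Borel measure on ℝ with ν((s,t]) = μ(s) − μ(t) for all s ≤ t. Assume that ∫_ℝ |ζ|^q dν(ζ) < ∞ for every real q ≥ 1. Then for every p ≥ 1, every ε > 0 and every R > 0 there exist points ξ₊ > R and ξ₋ < −R at which μ is differentiable and such that ξ₊^p |μ'(ξ₊)| < ε and |ξ₋|^p |μ'(ξ₋)| < ε. -/

import Mathlib

open MeasureTheory

lemma cheb_aux (ν : Measure ℝ) {q : ℝ} (hq0 : 0 ≤ q)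
    (hq : Integrable (fun ζ : ℝ => |ζ| ^ q) ν)
    {b : ℝ} (hb : 0 < b) {s : Set ℝ} (hs : MeasurableSet s) (h : ∀ x ∈ s, b ≤ |x|) :
    ν s ≤ ENNReal.ofReal ((∫ ζ, |ζ| ^ q ∂ν) / b ^ q) := by
  have hbq : (0:ℝ) < b ^ q := Real.rpow_pos_of_pos hb q
  have h1 : ENNReal.ofReal (b ^ q) * ν s ≤ ENNReal.ofReal (∫ ζ, |ζ| ^ q ∂ν) := by
    rw [← setLIntegral_const s (ENNReal.ofReal (b ^ q)),
      ofReal_integral_eq_lintegral_ofReal hq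
        (Filter.Eventually.of_forall fun x => Real.rpow_nonneg (abs_nonneg x) q)]
    calc ∫⁻ x in s, ENNReal.ofReal (b ^ q) ∂ν
        ≤ ∫⁻ x in s, ENNReal.ofReal (|x| ^ q) ∂ν := by
          refine setLIntegral_mono' hs fun x hx => ?_
          exact ENNReal.ofReal_le_ofReal (Real.rpow_le_rpow hb.le (h x hx) hq0)
      _ ≤ ∫⁻ x, ENNReal.ofReal (|x| ^ q) ∂ν := setLIntegral_le_lintegral s _
  rw [ENNReal.ofReal_div_of_pos hbq]
  rw [ENNReal.le_div_iff_mul_le (Or.inl (by simp [hbq])) (Or.inl ENNReal.ofReal_ne_top)]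
  rwa [mul_comm]

lemma density_aux (g : StieltjesFunction ℝ) {δ l r : ℝ}
    (h : ∀ᵐ x, x ∈ Set.Ioc l r →
      ENNReal.ofReal δ ≤ Measure.rnDeriv g.measure MeasureTheory.volume x) :
    ENNReal.ofReal δ * volume (Set.Ioc l r) ≤ g.measure (Set.Ioc l r) := by
  rw [← setLIntegral_const (Set.Ioc l r) (ENNReal.ofReal δ)]
  calc ∫⁻ x in Set.Ioc l r, ENNReal.ofReal δ ∂volume
      ≤ ∫⁻ x in Set.Ioc l r, Measure.rnDeriv g.measure volume x ∂volume := by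
        refine lintegral_mono_ae ?_
        rw [ae_restrict_iff' measurableSet_Ioc]
        exact h
    _ ≤ g.measure (Set.Ioc l r) := Measure.setLIntegral_rnDeriv_le _

lemma side_aux (μ : ℝ → ℝ) (hμ : Antitone μ)
    (hrc : ∀ ξ, ContinuousWithinAt μ (Set.Ici ξ) ξ)
    (ν : Measure ℝ) (hν : ∀ s t : ℝ, s ≤ t → ν (Set.Ioc s t) = ENNReal.ofReal (μ s - μ t))
    {q : ℝ} (hq0 : 0 ≤ q) (hq : Integrable (fun ζ : ℝ => |ζ| ^ q) ν)
    {p ε : ℝ} (hp : 0 ≤ p) (hε : 0 < ε)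
    {a l r : ℝ} (ha : 0 < a) (hr : r = l + a)
    (habs : ∀ x ∈ Set.Ioc l r, a ≤ |x| ∧ |x| ≤ 2 * a)
    (hcon : ∀ x ∈ Set.Ioc l r, DifferentiableAt ℝ μ x → ε ≤ |x| ^ p * |deriv μ x|) :
    ε * a / (2 * a) ^ p ≤ (∫ ζ, |ζ| ^ q ∂ν) / a ^ q := by
  set g : StieltjesFunction ℝ :=
    ⟨fun x => -μ x, fun x y h => neg_le_neg (hμ h), fun x => (hrc x).neg⟩ with hgdef
  have hline : l ≤ r := by rw [hr]; linarith
  have h2a : (0:ℝ) < (2 * a) ^ p := Real.rpow_pos_of_pos (by linarith) p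
  set δ : ℝ := ε / (2 * a) ^ p with hδdef
  have hδ : 0 < δ := div_pos hε h2a
  -- a.e. bound on the Radon-Nikodym derivative on the interval
  have hae : ∀ᵐ x, x ∈ Set.Ioc l r →
      ENNReal.ofReal δ ≤ Measure.rnDeriv g.measure volume x := by
    filter_upwards [g.ae_hasDerivAt] with x hx hxmem
    set D := (Measure.rnDeriv g.measure volume x).toReal with hDdef
    have hD0 : 0 ≤ D := ENNReal.toReal_nonneg
    have hderivμ : HasDerivAt μ (-D) x := by
      have := hx.neg
      have h' : (-⇑g) = μ := by
        funext y
        show -(-μ y) = μ y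
        ring
      rw [h'] at this
      exact this
    have hdiff : DifferentiableAt ℝ μ x := hderivμ.differentiableAt
    have hder : deriv μ x = -D := hderivμ.deriv
    have hbound := hcon x hxmem hdiff
    rw [hder, abs_neg, abs_of_nonneg hD0] at hbound
    have hxle : |x| ^ p ≤ (2 * a) ^ p :=
      Real.rpow_le_rpow (abs_nonneg x) (habs x hxmem).2 hp
    have : ε ≤ (2 * a) ^ p * D := by
      calc ε ≤ |x| ^ p * D := hbound
        _ ≤ (2 * a) ^ p * D := mul_le_mul_of_nonneg_right hxle hD0
    have hδD : δ ≤ D := by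
      rw [hδdef, div_le_iff₀ h2a]
      linarith [mul_comm ((2:ℝ) * a ^ p) D]
    calc ENNReal.ofReal δ ≤ ENNReal.ofReal D := ENNReal.ofReal_le_ofReal hδD
      _ ≤ Measure.rnDeriv g.measure volume x := ENNReal.ofReal_toReal_le
  have h1 : ENNReal.ofReal δ * volume (Set.Ioc l r) ≤ g.measure (Set.Ioc l r) :=
    density_aux g hae
  have hvol : volume (Set.Ioc l r) = ENNReal.ofReal a := by
    rw [Real.volume_Ioc, hr]; ring_nf
  have hgm : g.measure (Set.Ioc l r) = ν (Set.Ioc l r) := by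
    rw [StieltjesFunction.measure_Ioc, hν l r hline]
    congr 1
    show -μ r - -μ l = μ l - μ r
    ring
  have h2 : ν (Set.Ioc l r) ≤ ENNReal.ofReal ((∫ ζ, |ζ| ^ q ∂ν) / a ^ q) :=
    cheb_aux ν hq0 hq ha measurableSet_Ioc fun x hx => (habs x hx).1
  have h3 : ENNReal.ofReal (δ * a) ≤ ENNReal.ofReal ((∫ ζ, |ζ| ^ q ∂ν) / a ^ q) := by
    rw [ENNReal.ofReal_mul hδ.le]
    calc ENNReal.ofReal δ * ENNReal.ofReal a
        = ENNReal.ofReal δ * volume (Set.Ioc l r) := by rw [hvol]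
      _ ≤ g.measure (Set.Ioc l r) := h1
      _ = ν (Set.Ioc l r) := hgm
      _ ≤ _ := h2
  have hC : 0 ≤ (∫ ζ, |ζ| ^ q ∂ν) / a ^ q :=
    div_nonneg (integral_nonneg fun x => Real.rpow_nonneg (abs_nonneg x) q)
      (Real.rpow_pos_of_pos ha q).le
  have h4 : δ * a ≤ (∫ ζ, |ζ| ^ q ∂ν) / a ^ q := by
    rwa [ENNReal.ofReal_le_ofReal_iff hC] at h3
  calc ε * a / (2 * a) ^ p = δ * a := by rw [hδdef]; ring
    _ ≤ _ := h4

/-- Weighted part of Lemma 3.3(i): if `μ` is non-increasing, bounded, right-continuous,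
tends to `0` at `+∞`, and the Lebesgue–Stieltjes measure `ν` of `-μ` has finite moments of
all orders `q ≥ 1`, then beyond every threshold `R` (in both directions) there are
differentiability points of `μ` where `|ξ|^p |μ'(ξ)|` is smaller than any `ε > 0`. -/
theorem antitone_tail_weighted_deriv_small_at_infinity
    (μ : ℝ → ℝ) (hμ : Antitone μ) (M : ℝ) (hbdd : ∀ ξ, |μ ξ| ≤ M)
    (hrc : ∀ ξ, ContinuousWithinAt μ (Set.Ici ξ) ξ)
    (hlim : Filter.Tendsto μ Filter.atTop (nhds 0))
    (ν : Measure ℝ)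
    (hν : ∀ s t : ℝ, s ≤ t → ν (Set.Ioc s t) = ENNReal.ofReal (μ s - μ t))
    (hmom : ∀ q : ℝ, 1 ≤ q → Integrable (fun ζ : ℝ => |ζ| ^ q) ν)
    (p ε R : ℝ) (hp : 1 ≤ p) (hε : 0 < ε) (hR : 0 < R) :
    (∃ ξp > R, DifferentiableAt ℝ μ ξp ∧ ξp ^ p * |deriv μ ξp| < ε) ∧
    (∃ ξm < -R, DifferentiableAt ℝ μ ξm ∧ |ξm| ^ p * |deriv μ ξm| < ε) := by
  have hp0 : (0:ℝ) ≤ p := by linarith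
  set q : ℝ := p + 1 with hqdef
  have hq1 : (1:ℝ) ≤ q := by rw [hqdef]; linarith
  have hq0 : (0:ℝ) ≤ q := by linarith
  have hint := hmom q hq1
  set C : ℝ := ∫ ζ, |ζ| ^ q ∂ν with hCdef
  have hC0 : 0 ≤ C := integral_nonneg fun x => Real.rpow_nonneg (abs_nonneg x) q
  have h2p : (0:ℝ) < 2 ^ p := Real.rpow_pos_of_pos (by norm_num) p
  set s : ℝ := Real.sqrt (C * 2 ^ p / ε) with hsdef
  have hs0 : 0 ≤ s := Real.sqrt_nonneg _
  set a : ℝ := max R s + 1 with hadef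
  have haR : R < a := by
    have : R ≤ max R s := le_max_left _ _
    rw [hadef]; linarith
  have ha : 0 < a := lt_trans hR haR
  have hsa : s + 1 ≤ a := by
    have : s ≤ max R s := le_max_right _ _
    rw [hadef]; linarith
  have hsq : s ^ 2 = C * 2 ^ p / ε :=
    Real.sq_sqrt (div_nonneg (mul_nonneg hC0 h2p.le) hε.le)
  have hkey : ¬ (ε * a / (2 * a) ^ p ≤ C / a ^ q) := by
    have hap : (0:ℝ) < a ^ p := Real.rpow_pos_of_pos ha p
    have haq : a ^ q = a ^ p * a := by
      rw [hqdef, Real.rpow_add ha, Real.rpow_one]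
    have h2ap : (2 * a) ^ p = 2 ^ p * a ^ p :=
      Real.mul_rpow (by norm_num) ha.le
    have ha2 : C * 2 ^ p < ε * a ^ 2 := by
      have h1 : C * 2 ^ p / ε < a ^ 2 := by
        nlinarith
      calc C * 2 ^ p = (C * 2 ^ p / ε) * ε := by field_simp
        _ < a ^ 2 * ε := by
            exact mul_lt_mul_of_pos_right h1 hε
        _ = ε * a ^ 2 := by ring
    rw [not_le, haq, h2ap, div_lt_div_iff₀ (by positivity) (by positivity)]
    nlinarith [hap, ha]
  constructor
  · by_contra hco
    push_neg at hco
    refine hkey (side_aux μ hμ hrc ν hν hq0 hint hp0 hε ha (two_mul a) ?_ ?_)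
    · rintro x ⟨hx1, hx2⟩
      have hx0 : 0 < x := lt_trans ha hx1
      rw [abs_of_pos hx0]
      exact ⟨hx1.le, hx2⟩
    · rintro x ⟨hx1, hx2⟩ hdiff
      have hx0 : 0 < x := lt_trans ha hx1
      rw [abs_of_pos hx0]
      exact hco x (lt_trans haR hx1) hdiff
  · by_contra hco
    push_neg at hco
    refine hkey (side_aux μ hμ hrc ν hν hq0 hint hp0 hε ha (r := -a) (l := -(2*a))
      (by ring) ?_ ?_)
    · rintro x ⟨hx1, hx2⟩
      have hx0 : x < 0 := lt_of_le_of_lt hx2 (by linarith)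
      rw [abs_of_neg hx0]
      constructor <;> linarith
    · rintro x ⟨hx1, hx2⟩ hdiff
      exact hco x (by linarith) hdiff
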